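/- Temperature runaways for slowly moving observers in Spiegel's model: let c > 0 and, for χ ∈ (0,1), define g(χ) = c·( artanh(χ)/χ − 1 ) and v(χ) = χ / g(χ). Then lim_{χ→1⁻} v(χ) = 0 and lim_{χ→1⁻} g(χ)·√(1 − v(χ)²) = +∞. (Interpreting v as the boost velocity and Γ′ = g·√(1−v²) as the growth rate seen by the boosted observer, there exist observers with infinitesimal speed relative to the medium who witness arbitrarily fast spatially homogeneous temperature runaways.) -/

import Mathlib

/-!
Statement 13: temperature runaways for slowly moving observers in Spiegel's model:
with `g(χ) = c(artanh(χ)/χ − 1)` and `v(χ) = χ/g(χ)`, one has `v(χ) → 0` and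
`g(χ)·√(1 − v(χ)²) → +∞` as `χ → 1⁻`.
-/

noncomputable section
open Real Filter

/-- The inverse hyperbolic tangent, `artanh x = (1/2) log((1+x)/(1−x))`. -/
def artanh (x : ℝ) : ℝ := (1 / 2) * Real.log ((1 + x) / (1 - x))

/-- The rest-frame growth parameter `g(χ) = c(artanh(χ)/χ − 1)`. -/
def gfun (c χ : ℝ) : ℝ := c * (_root_.artanh χ / χ - 1)

/-- The boost velocity `v(χ) = χ/g(χ)`. -/
def vfun (c χ : ℝ) : ℝ := χ / gfun c χ

lemma gfun_atTop (c : ℝ) (hc : 0 < c) :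
    Tendsto (fun χ => gfun c χ) (nhdsWithin 1 (Set.Iio 1)) atTop := by
  have h1 : Tendsto (fun χ : ℝ => 1 - χ) (nhdsWithin 1 (Set.Iio 1))
      (nhdsWithin 0 (Set.Ioi 0)) := by
    apply tendsto_nhdsWithin_of_tendsto_nhds_of_eventually_within
    · have : Tendsto (fun χ : ℝ => 1 - χ) (nhds 1) (nhds (1 - 1)) :=
        (continuous_const.sub continuous_id).tendsto 1
      simpa using this.mono_left nhdsWithin_le_nhds
    · filter_upwards [self_mem_nhdsWithin] with χ hχ
      exact sub_pos.mpr (Set.mem_Iio.mp hχ)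
  have h2 : Tendsto (fun χ : ℝ => (1 - χ)⁻¹) (nhdsWithin 1 (Set.Iio 1)) atTop :=
    tendsto_inv_nhdsGT_zero.comp h1
  have h3 : Tendsto (fun χ : ℝ => (1 + χ)) (nhdsWithin 1 (Set.Iio 1)) (nhds 2) := by
    have : Tendsto (fun χ : ℝ => (1 + χ)) (nhds 1) (nhds (1 + 1)) :=
      (continuous_const.add continuous_id).tendsto 1
    have h := this.mono_left (nhdsWithin_le_nhds (s := Set.Iio 1))
    norm_num at h
    exact h
  have h4 : Tendsto (fun χ : ℝ => (1 + χ) / (1 - χ)) (nhdsWithin 1 (Set.Iio 1)) atTop := by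
    have := Tendsto.atTop_mul_pos (by norm_num : (0:ℝ) < 2) h2 h3
    simpa [div_eq_mul_inv, mul_comm] using this
  have h5 : Tendsto (fun χ : ℝ => _root_.artanh χ) (nhdsWithin 1 (Set.Iio 1)) atTop := by
    have hlog := Real.tendsto_log_atTop.comp h4
    have := Tendsto.const_mul_atTop (by norm_num : (0:ℝ) < 1/2) hlog
    simpa [_root_.artanh, Function.comp] using this
  have hinv : Tendsto (fun χ : ℝ => χ⁻¹) (nhdsWithin 1 (Set.Iio 1)) (nhds 1) := by
    have : Tendsto (fun χ : ℝ => χ⁻¹) (nhds (1:ℝ)) (nhds 1) := by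
      simpa using (tendsto_inv_iff₀ (by norm_num : (1:ℝ) ≠ 0)).mpr tendsto_id
    exact this.mono_left nhdsWithin_le_nhds
  have h6 : Tendsto (fun χ : ℝ => _root_.artanh χ / χ) (nhdsWithin 1 (Set.Iio 1)) atTop := by
    have := Tendsto.atTop_mul_pos (by norm_num : (0:ℝ) < 1) h5 hinv
    simpa [div_eq_mul_inv] using this
  have h7 : Tendsto (fun χ : ℝ => _root_.artanh χ / χ - 1) (nhdsWithin 1 (Set.Iio 1)) atTop :=
    tendsto_atTop_add_const_right _ (-1) h6 |>.congr (by intro x; ring_nf)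
  have := Tendsto.const_mul_atTop hc h7
  simpa [gfun] using this

lemma vfun_zero (c : ℝ) (hc : 0 < c) :
    Tendsto (fun χ => vfun c χ) (nhdsWithin 1 (Set.Iio 1)) (nhds 0) := by
  have hg := gfun_atTop c hc
  have hginv : Tendsto (fun χ => (gfun c χ)⁻¹) (nhdsWithin 1 (Set.Iio 1)) (nhds 0) :=
    hg.inv_tendsto_atTop
  have hχ : Tendsto (fun χ : ℝ => χ) (nhdsWithin 1 (Set.Iio 1)) (nhds 1) :=
    tendsto_id.mono_left nhdsWithin_le_nhds
  have := hχ.mul hginv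
  simpa [vfun, div_eq_mul_inv] using this

theorem spiegel_temperature_runaways (c : ℝ) (hc : 0 < c) :
    Tendsto (fun χ => vfun c χ) (nhdsWithin 1 (Set.Iio 1)) (nhds 0) ∧
    Tendsto (fun χ => gfun c χ * Real.sqrt (1 - vfun c χ ^ 2))
      (nhdsWithin 1 (Set.Iio 1)) atTop := by
  have hv := vfun_zero c hc
  refine ⟨hv, ?_⟩
  have hsq : Tendsto (fun χ => Real.sqrt (1 - vfun c χ ^ 2))
      (nhdsWithin 1 (Set.Iio 1)) (nhds 1) := by
    have h1 : Tendsto (fun χ => 1 - vfun c χ ^ 2) (nhdsWithin 1 (Set.Iio 1)) (nhds 1) := by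
      have := (tendsto_const_nhds (x := (1:ℝ))).sub (hv.pow 2)
      simpa using this
    have := (Real.continuous_sqrt.tendsto 1).comp h1
    simpa [Function.comp_def] using this
  exact Tendsto.atTop_mul_pos (by norm_num : (0:ℝ) < 1) (gfun_atTop c hc) hsq
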